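/- arXiv:1604.05856 — 2 statements merged into one kernel-verified Lean document; each statement's English description precedes it below -/
import Mathlib

section
/- Let G be a finite connected simple graph with n vertices and m edges, q : D(G) → ℍ a map, U the quaternionic transition matrix determined by q, and W, D_w as below with weight w = q. Suppose there exists an invertible complex 2n×2n matrix P such that P⁻¹·ψ(ᵀW)·P is lower triangular with diagonal entries μ₁, …, μ_{2n} and P⁻¹·ψ(D_w)·P is lower triangular with diagonal entries ξ₁, …, ξ_{2n}. Then for every λ ∈ ℂ, det(λ·I_{4m} − ψ(U)) = (λ² − 1)^{2m−2n} · ∏_{r=1}^{2n} (λ² − λ·μ_r + ξ_r − 1). -/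
noncomputable section

open Matrix

/-- Simplex part of a quaternion: `q = Sc q + j * Pc q`. -/
def Sc (q : Quaternion ℝ) : ℂ := ⟨q.re, q.imI⟩

/-- Perplex part of a quaternion: `q = Sc q + j * Pc q`. -/
def Pc (q : Quaternion ℝ) : ℂ := ⟨q.imJ, -q.imK⟩

/-- The map ψ sending a quaternionic matrix `M = M^S + j·M^P` (symplectic decomposition)
to the complex block matrix `[[M^S, -conj(M^P)], [M^P, conj(M^S)]]`. -/
def psi {I J : Type*} (M : Matrix I J (Quaternion ℝ)) :
    Matrix (I ⊕ I) (J ⊕ J) ℂ :=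
  Matrix.fromBlocks (M.map Sc) (-((M.map Pc).map (starRingEnd ℂ)))
    (M.map Pc) ((M.map Sc).map (starRingEnd ℂ))

variable {V : Type*}

/-- The quaternionic weighted matrix W: `W u v = w((u,v))` if `(u,v)` is an arc, else 0. -/
def quatWeightMatrix [Fintype V] [DecidableEq V] (G : SimpleGraph V) [DecidableRel G.Adj]
    (w : G.Dart → Quaternion ℝ) : Matrix V V (Quaternion ℝ) := fun u v =>
  if h : G.Adj u v then w ⟨(u, v), h⟩ else 0

/-- The quaternionic weighted arc matrix B_w: `(B_w) e f = w(f)` if `t(e) = o(f)`, else 0. -/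
def quatArcMatrix [Fintype V] [DecidableEq V] (G : SimpleGraph V) [DecidableRel G.Adj]
    (w : G.Dart → Quaternion ℝ) : Matrix G.Dart G.Dart (Quaternion ℝ) := fun e f =>
  if e.toProd.2 = f.toProd.1 then w f else 0

/-- The quaternionic arc-inversion matrix J₀: `(J₀) e f = 1` if `f = e⁻¹`, else 0. -/
def quatArcInvMatrix [Fintype V] [DecidableEq V] (G : SimpleGraph V) [DecidableRel G.Adj] :
    Matrix G.Dart G.Dart (Quaternion ℝ) := fun e f =>
  if f = e.symm then 1 else 0

/-- The quaternionic weighted degree matrix D_w: diagonal with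
`(D_w)_{uu} = Σ_{e : o(e) = u} w(e)`. -/
def quatDegMatrix [Fintype V] [DecidableEq V] (G : SimpleGraph V) [DecidableRel G.Adj]
    (w : G.Dart → Quaternion ℝ) : Matrix V V (Quaternion ℝ) :=
  Matrix.diagonal fun u => ∑ e : G.Dart, if e.toProd.1 = u then w e else 0

/-- The 2m×n matrix K: `K e v = w(e)` if `o(e) = v`, else 0. -/
def quatKMatrix [Fintype V] [DecidableEq V] (G : SimpleGraph V) [DecidableRel G.Adj]
    (w : G.Dart → Quaternion ℝ) : Matrix G.Dart V (Quaternion ℝ) := fun e v =>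
  if e.toProd.1 = v then w e else 0

/-- The 2m×n matrix L: `L e v = 1` if `t(e) = v`, else 0. -/
def quatLMatrix [Fintype V] [DecidableEq V] (G : SimpleGraph V) [DecidableRel G.Adj] :
    Matrix G.Dart V (Quaternion ℝ) := fun e v =>
  if e.toProd.2 = v then 1 else 0

/-- The quaternionic transition matrix determined by `q : D(G) → ℍ`. -/
def quatTransition [Fintype V] [DecidableEq V] (G : SimpleGraph V) [DecidableRel G.Adj]
    (q : G.Dart → Quaternion ℝ) : Matrix G.Dart G.Dart (Quaternion ℝ) := fun e f =>
  if f = e.symm then q e - 1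
  else if f.toProd.2 = e.toProd.1 then q e else 0

open Polynomial

lemma Sc_zero : Sc 0 = 0 := by simp [Sc, Complex.ext_iff]; exact ⟨rfl, rfl⟩
lemma Pc_zero : Pc 0 = 0 := by simp [Pc, Complex.ext_iff]; exact ⟨rfl, rfl⟩
lemma Sc_one : Sc 1 = 1 := by simp [Sc, Complex.ext_iff]; exact ⟨rfl, rfl⟩
lemma Pc_one : Pc 1 = 0 := by simp [Pc, Complex.ext_iff]; exact ⟨rfl, rfl⟩
lemma Sc_sub (p q : Quaternion ℝ) : Sc (p - q) = Sc p - Sc q := by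
  simp [Sc, Complex.ext_iff]
lemma Pc_sub (p q : Quaternion ℝ) : Pc (p - q) = Pc p - Pc q := by
  simp [Pc, Complex.ext_iff]; ring
lemma Sc_mul (p q : Quaternion ℝ) :
    Sc (p * q) = Sc p * Sc q - (starRingEnd ℂ) (Pc p) * Pc q := by
  simp [Sc, Pc, Complex.ext_iff, Complex.mul_re, Complex.mul_im]; constructor <;> ring
lemma Pc_mul (p q : Quaternion ℝ) :
    Pc (p * q) = (starRingEnd ℂ) (Sc p) * Pc q + Pc p * Sc q := by
  simp [Sc, Pc, Complex.ext_iff, Complex.mul_re, Complex.mul_im]; constructor <;> ring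

lemma psi_apply {I J : Type*} (M : Matrix I J (Quaternion ℝ)) :
    ∀ i j, (psi M (Sum.inl i) (Sum.inl j) = Sc (M i j)) := fun _ _ => rfl

lemma Sc_add (p q : Quaternion ℝ) : Sc (p + q) = Sc p + Sc q := by
  simp [Sc, Complex.ext_iff]
lemma Pc_add (p q : Quaternion ℝ) : Pc (p + q) = Pc p + Pc q := by
  simp [Pc, Complex.ext_iff]; ring
lemma Sc_sum {ι : Type*} (s : Finset ι) (f : ι → Quaternion ℝ) :
    Sc (∑ i ∈ s, f i) = ∑ i ∈ s, Sc (f i) := by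
  classical
  induction s using Finset.cons_induction with
  | empty => simp [Sc_zero]
  | cons a s ha ih => simp [Finset.sum_insert ha, Sc_add, ih]
lemma Pc_sum {ι : Type*} (s : Finset ι) (f : ι → Quaternion ℝ) :
    Pc (∑ i ∈ s, f i) = ∑ i ∈ s, Pc (f i) := by
  classical
  induction s using Finset.cons_induction with
  | empty => simp [Pc_zero]
  | cons a s ha ih => simp [Finset.sum_insert ha, Pc_add, ih]

lemma psi_sub {I J : Type*} (M N : Matrix I J (Quaternion ℝ)) :
    psi (M - N) = psi M - psi N := by
  ext (i|i) (j|j) <;>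
    simp [psi, Sc_sub, Pc_sub, map_sub] <;> ring

lemma psi_one {I : Type*} [DecidableEq I] :
    psi (1 : Matrix I I (Quaternion ℝ)) = 1 := by
  ext (i|i) (j|j) <;>
    simp [psi, Matrix.one_apply, apply_ite Sc, apply_ite Pc, Sc_one, Sc_zero, Pc_one, Pc_zero,
      apply_ite (starRingEnd ℂ)]

lemma psi_mul {I J K : Type*} [Fintype J] (M : Matrix I J (Quaternion ℝ))
    (N : Matrix J K (Quaternion ℝ)) : psi (M * N) = psi M * psi N := by
  ext (i|i) (k|k) <;>
  · simp only [psi, Matrix.mul_apply, fromBlocks_apply₁₁, fromBlocks_apply₁₂,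
      fromBlocks_apply₂₁, fromBlocks_apply₂₂, Fintype.sum_sum_type, Matrix.map_apply,
      Matrix.neg_apply, Sc_sum, Pc_sum, map_sum, Finset.sum_neg_distrib, neg_neg,
      ← Finset.sum_add_distrib, ← Finset.sum_sub_distrib, ← Finset.sum_neg_distrib]
    refine Finset.sum_congr rfl fun j _ => ?_
    simp only [Sc_mul, Pc_mul, map_sub, map_add, _root_.map_mul, Complex.conj_conj]
    ring

section GraphIdentities
variable [Fintype V] [DecidableEq V] (G : SimpleGraph V) [DecidableRel G.Adj]
  (q : G.Dart → Quaternion ℝ)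

lemma transition_eq :
    quatTransition G q = quatKMatrix G q * (quatLMatrix G)ᵀ - quatArcInvMatrix G := by
  funext e f
  simp only [quatTransition, quatKMatrix, quatLMatrix, quatArcInvMatrix, Matrix.sub_apply,
    Matrix.mul_apply, Matrix.transpose_apply, ite_mul, mul_ite, mul_one, mul_zero, zero_mul]
  have hsum : (∑ x : V, if f.toProd.2 = x then if e.toProd.1 = x then q e else 0 else 0)
      = if f.toProd.2 = e.toProd.1 then q e else 0 := by
    rw [Finset.sum_eq_single e.toProd.1]
    · by_cases h : f.toProd.2 = e.toProd.1 <;> simp [h]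
    · intro v _ hv
      by_cases h : f.toProd.2 = v <;> simp [h, Ne.symm hv]
    · simp
  rw [hsum]
  by_cases h : f = e.symm
  · subst h
    simp only [SimpleGraph.Dart.symm, Prod.snd_swap, if_pos rfl, if_true]
    try ring
  · simp [h]

lemma LK_eq : (quatLMatrix G)ᵀ * quatKMatrix G q = (quatWeightMatrix G q)ᵀ := by
  funext u v
  simp only [quatLMatrix, quatKMatrix, quatWeightMatrix, Matrix.mul_apply,
    Matrix.transpose_apply, ite_mul, mul_ite, one_mul, zero_mul]
  by_cases h : G.Adj v u
  · rw [Finset.sum_eq_single (⟨(v, u), h⟩ : G.Dart)]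
    · simp [dif_pos h]
    · intro e _ hne
      have : ¬(e.toProd.2 = u ∧ e.toProd.1 = v) := by
        rintro ⟨h1, h2⟩
        exact hne (SimpleGraph.Dart.ext _ _ (Prod.ext h2 h1))
      by_cases h1 : e.toProd.2 = u <;> by_cases h2 : e.toProd.1 = v <;>
        simp_all
    · simp
  · rw [dif_neg h, Finset.sum_eq_zero]
    intro e _
    by_cases h1 : e.toProd.2 = u <;> by_cases h2 : e.toProd.1 = v <;> simp_all
    exact absurd (h2 ▸ h1 ▸ e.adj) h

lemma LJK_eq :
    (quatLMatrix G)ᵀ * (quatArcInvMatrix G * quatKMatrix G q) = quatDegMatrix G q := by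
  have hJK : quatArcInvMatrix G * quatKMatrix G q =
      Matrix.of fun e v => if e.toProd.2 = v then q e.symm else 0 := by
    funext e v
    simp only [quatArcInvMatrix, quatKMatrix, Matrix.mul_apply, ite_mul, one_mul, zero_mul,
      Matrix.of_apply]
    rw [Finset.sum_eq_single e.symm]
    · simp [SimpleGraph.Dart.symm] <;> rfl
    · intro f _ hf; simp [hf]
    · simp
  rw [hJK]
  funext u v
  simp only [quatLMatrix, quatDegMatrix, Matrix.mul_apply, Matrix.transpose_apply, ite_mul,
    mul_ite, one_mul, zero_mul, Matrix.diagonal_apply, Matrix.of_apply]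
  by_cases huv : u = v
  · subst huv
    rw [if_pos rfl]
    rw [← Equiv.sum_comp (Function.Involutive.toPerm _ SimpleGraph.Dart.symm_involutive)
      (fun e => if e.toProd.1 = u then q e else 0)]
    refine Finset.sum_congr rfl fun e _ => ?_
    by_cases h1 : e.toProd.2 = u <;>
      simp [Function.Involutive.toPerm, SimpleGraph.Dart.symm, h1]
  · rw [if_neg huv, Finset.sum_eq_zero]
    intro e _
    by_cases h1 : e.toProd.2 = u <;> by_cases h2 : e.toProd.2 = v <;> simp_all

lemma JJ_eq : quatArcInvMatrix G * quatArcInvMatrix G = 1 := by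
  funext e g
  simp only [quatArcInvMatrix, Matrix.mul_apply, ite_mul, one_mul, zero_mul, Matrix.one_apply]
  rw [Finset.sum_eq_single e.symm]
  · simp [eq_comm (a := g) (b := e)]
  · intro f _ hf; simp [hf]
  · simp

end GraphIdentities

section AbstractDet
variable {R : Type*} [CommRing R] {α β : Type*} [Fintype α] [Fintype β]
  [DecidableEq α] [DecidableEq β]

private lemma XY_eq (J : Matrix β β R) (hJ : J * J = 1) (t : R) :
    (t • 1 + J) * (t • 1 - J) = (t ^ 2 - 1) • (1 : Matrix β β R) := by
  simp only [Matrix.add_mul, Matrix.mul_sub, Matrix.smul_mul, Matrix.mul_smul,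
    Matrix.one_mul, Matrix.mul_one, hJ]
  module

/-- Key Bass-type determinant identity over any commutative ring. -/
lemma bass_identity (T : Matrix α β R) (K : Matrix β α R) (J : Matrix β β R)
    (hJ : J * J = 1) (t : R) :
    (t • (1 : Matrix β β R) - (K * T - J)).det * (t ^ 2 - 1) ^ (Fintype.card α)
        * (t ^ 2 - 1) ^ (Fintype.card β) =
      ((t ^ 2 - 1) • (1 : Matrix α α R) - (t • (T * K) - T * J * K)).det
        * (t ^ 2 - 1) ^ (Fintype.card β) * (t • (1 : Matrix β β R) + J).det := by
  have hXY := XY_eq J hJ t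
  have e1 : fromBlocks (1 : Matrix α α R) T K (t • 1 + J) =
      fromBlocks 1 0 K 1 * fromBlocks 1 T 0 ((t • 1 + J) - K * T) := by
    rw [Matrix.fromBlocks_multiply, Matrix.fromBlocks_inj]
    refine ⟨by simp, by simp, by simp, by simp [Matrix.mul_sub]⟩
  have d1 : (fromBlocks (1 : Matrix α α R) T K (t • 1 + J)).det
      = ((t • 1 + J) - K * T).det := by
    rw [e1, Matrix.det_mul, Matrix.det_fromBlocks_zero₁₂, Matrix.det_fromBlocks_zero₂₁]
    simp
  have e2 : fromBlocks (1 : Matrix α α R) T K (t • 1 + J) *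
        fromBlocks ((t ^ 2 - 1) • 1) 0 (-((t • 1 - J) * K)) ((t ^ 2 - 1) • 1) =
      fromBlocks ((t ^ 2 - 1) • 1 - T * (t • 1 - J) * K) ((t ^ 2 - 1) • T) 0
        ((t ^ 2 - 1) • (t • 1 + J)) := by
    rw [Matrix.fromBlocks_multiply, Matrix.fromBlocks_inj]
    refine ⟨?_, ?_, ?_, ?_⟩
    · rw [Matrix.one_mul, Matrix.mul_neg, ← Matrix.mul_assoc]
      abel
    · simp [Matrix.mul_smul]
    · rw [Matrix.mul_neg, ← Matrix.mul_assoc, hXY, Matrix.mul_smul, Matrix.mul_one,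
        Matrix.smul_mul, Matrix.one_mul]
      abel
    · simp [Matrix.mul_smul]
  have d2 := congrArg Matrix.det e2
  rw [Matrix.det_mul, Matrix.det_fromBlocks_zero₁₂, Matrix.det_fromBlocks_zero₂₁,
    Matrix.det_smul, Matrix.det_smul, Matrix.det_smul, Matrix.det_one, Matrix.det_one,
    mul_one, mul_one, d1] at d2
  have hsimp : t • (1 : Matrix β β R) - (K * T - J) = (t • 1 + J) - K * T := by abel
  have hTYK : T * (t • (1 : Matrix β β R) - J) * K = t • (T * K) - T * J * K := by
    rw [Matrix.mul_sub, Matrix.mul_smul, Matrix.mul_one, Matrix.sub_mul, Matrix.smul_mul]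
  rw [← hTYK, hsimp]
  linear_combination d2
end AbstractDet

section InvolutionDet
variable {R : Type*} [CommRing R] {D : Type*} [Fintype D] [DecidableEq D]

lemma det_tblock_sq {O : Type*} [Fintype O] [DecidableEq O] (t : R) :
    ((fromBlocks (t • (1 : Matrix O O R)) 1 1 (t • 1) : Matrix (O ⊕ O) (O ⊕ O) R)).det ^ 2 =
      (t ^ 2 - 1) ^ (Fintype.card O + Fintype.card O) := by
  set A : Matrix (O ⊕ O) (O ⊕ O) R := fromBlocks (t • 1) 1 1 (t • 1) with hA
  set B : Matrix (O ⊕ O) (O ⊕ O) R := fromBlocks (t • 1) (-1) (-1) (t • 1) with hB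
  set C : Matrix (O ⊕ O) (O ⊕ O) R := fromBlocks 1 0 0 (-1) with hC
  have hAB : A * B = fromBlocks ((t ^ 2 - 1) • 1) 0 0 ((t ^ 2 - 1) • 1) := by
    rw [hA, hB, Matrix.fromBlocks_multiply, Matrix.fromBlocks_inj]
    refine ⟨?_, ?_, ?_, ?_⟩ <;>
    · simp only [Matrix.smul_mul, Matrix.mul_smul, Matrix.mul_one, Matrix.one_mul,
        Matrix.mul_neg, Matrix.neg_mul, Matrix.mul_one, smul_neg]
      module
  have hCAC : C * A * C = B := by
    rw [hC, hA, hB, Matrix.fromBlocks_multiply, Matrix.fromBlocks_multiply, Matrix.fromBlocks_inj]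
    refine ⟨?_, ?_, ?_, ?_⟩ <;>
    · simp only [Matrix.smul_mul, Matrix.mul_smul, Matrix.mul_one, Matrix.one_mul,
        Matrix.mul_neg, Matrix.neg_mul, Matrix.mul_zero, Matrix.zero_mul, neg_neg, smul_neg]
      module
  have hCC : C * C = 1 := by
    rw [hC, Matrix.fromBlocks_multiply]
    simp [← Matrix.fromBlocks_one]
  have hdetB : B.det = A.det := by
    rw [← hCAC, Matrix.det_mul, Matrix.det_mul]
    calc C.det * A.det * C.det = A.det * (C.det * C.det) := by ring
    _ = A.det * (C * C).det := by rw [Matrix.det_mul]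
    _ = A.det := by rw [hCC, Matrix.det_one, mul_one]
  have hfin : A.det * B.det = (t ^ 2 - 1) ^ (Fintype.card O + Fintype.card O) := by
    rw [← Matrix.det_mul, hAB, Matrix.det_fromBlocks_zero₁₂, Matrix.det_smul]
    simp [pow_add]
  rw [pow_two]
  calc A.det * A.det = A.det * B.det := by rw [hdetB]
  _ = (t ^ 2 - 1) ^ (Fintype.card O + Fintype.card O) := hfin

/-- det(t•1 + J_σ)² = (t²−1)^|D| for a fixed-point-free involution σ. -/
lemma det_invol_sq (σ : D → D) (hσ : Function.Involutive σ) (hfix : ∀ d, σ d ≠ d) (t : R) :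
    (t • (1 : Matrix D D R) + Matrix.of (fun e f => if f = σ e then (1 : R) else 0)).det ^ 2 =
      (t ^ 2 - 1) ^ (Fintype.card D) := by
  classical
  let eqF := Fintype.equivFin D
  let O := {d : D // eqF d < eqF (σ d)}
  have key : ∀ d : D, eqF d < eqF (σ d) ∨ eqF (σ d) < eqF d := fun d =>
    lt_or_gt_of_ne (fun h => hfix d (eqF.injective h.symm))
  let ε : O ⊕ O ≃ D :=
    { toFun := fun x => match x with
        | Sum.inl a => a.1
        | Sum.inr a => σ a.1
      invFun := fun d => if h : eqF d < eqF (σ d) then Sum.inl ⟨d, h⟩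
        else Sum.inr ⟨σ d, by
          rw [hσ d]
          rcases key d with h' | h'
          · exact absurd h' h
          · exact h'⟩
      left_inv := by
        rintro (⟨a, ha⟩ | ⟨a, ha⟩)
        · simp [dif_pos ha]
        · have h2 : ¬ eqF (σ a) < eqF (σ (σ a)) := by
            rw [hσ a]; exact not_lt.2 (le_of_lt ha)
          simp only [dif_neg h2]
          congr 1
          exact Subtype.ext (hσ a)
      right_inv := by
        intro d
        by_cases h : eqF d < eqF (σ d)
        · simp [dif_pos h]
        · simp only [dif_neg h]
          exact hσ d }
  have hεl : ∀ a : O, ε (Sum.inl a) = (a : D) := fun a => rfl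
  have hεr : ∀ a : O, ε (Sum.inr a) = σ (a : D) := fun a => rfl
  have hOO : ∀ (a b : O), (b : D) ≠ σ (a : D) := by
    rintro ⟨a, ha⟩ ⟨b, hb⟩ h
    simp only at h
    subst h
    rw [hσ a] at hb
    exact absurd hb (not_lt.2 (le_of_lt ha))
  have hsinj : ∀ a b : O, (σ (a : D) = σ (b : D)) ↔ a = b := fun a b => by
    rw [hσ.injective.eq_iff, Subtype.coe_inj]
  set M : Matrix D D R := t • 1 + Matrix.of (fun e f => if f = σ e then (1 : R) else 0) with hM
  have hsub : M.submatrix ε ε = fromBlocks (t • 1) 1 1 (t • 1) := by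
    ext (a | a) (b | b) <;>
      simp only [Matrix.submatrix_apply, hεl, hεr, hM, Matrix.add_apply, Matrix.smul_apply,
        Matrix.one_apply, Matrix.of_apply, fromBlocks_apply₁₁, fromBlocks_apply₁₂,
        fromBlocks_apply₂₁, fromBlocks_apply₂₂, smul_eq_mul, mul_ite, mul_one, mul_zero]
    · rw [if_neg (hOO a b), add_zero]
      by_cases h : a = b
      · subst h; simp
      · rw [if_neg (fun hc => h (Subtype.ext hc)), if_neg h]
    · rw [if_neg (hOO b a), zero_add]
      by_cases h : a = b
      · subst h; simp
      · rw [if_neg (fun hc => h (Subtype.ext (hσ.injective hc)).symm), if_neg h]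
    · have h3 : σ (σ (a : D)) = (a : D) := hσ _
      rw [h3, if_neg (fun hc => hOO a b hc.symm), zero_add]
      by_cases h : a = b
      · subst h; simp
      · rw [if_neg (fun hc => h (Subtype.ext hc.symm)), if_neg h]
    · have h4 : σ (σ (a : D)) = (a : D) := hσ _
      rw [h4, if_neg (show ¬(σ (b : D) = (a : D)) from fun hc => hOO b a hc.symm), add_zero]
      by_cases h : a = b
      · subst h; simp
      · rw [if_neg (fun hc => h (Subtype.ext (hσ.injective hc))), if_neg h]
  haveI : Fintype O := by unfold O; infer_instance
  have hcard : Fintype.card D = Fintype.card O + Fintype.card O := by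
    rw [← Fintype.card_sum]
    exact (Fintype.card_congr ε).symm
  have hdet : M.det =
      ((fromBlocks (t • (1 : Matrix O O R)) 1 1 (t • 1) : Matrix (O ⊕ O) (O ⊕ O) R)).det := by
    rw [show M.det = (M.submatrix ε ε).det from (Matrix.det_submatrix_equiv_self ε M).symm, hsub]
  rw [hdet, det_tblock_sq, hcard]
end InvolutionDet

lemma det_eq_prod_diag {I : Type*} [Fintype I] [DecidableEq I] (M : Matrix I I ℂ)
    (b : I → ℕ) (hb : Function.Injective b) (h : ∀ r s, b r < b s → M r s = 0) :
    M.det = ∏ r, M r r := by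
  have hBT : Mᵀ.BlockTriangular b := fun i j hij => h j i hij
  rw [← Matrix.det_transpose M, hBT.det, Finset.prod_image (fun x _ y _ hxy => hb hxy)]
  refine Finset.prod_congr rfl fun r _ => ?_
  haveI : Unique {i // b i = b r} := ⟨⟨⟨r, rfl⟩⟩, fun s => Subtype.ext (hb s.2)⟩
  rw [Matrix.det_unique]
  show Mᵀ ((default : {i // b i = b r}) : I) ((default : {i // b i = b r}) : I) = M r r
  have hd : ((default : {i // b i = b r}) : I) = r := hb (default : {i // b i = b r}).2
  rw [hd, Matrix.transpose_apply]

lemma map_eval_smul_one_sub {I : Type*} [Fintype I] [DecidableEq I] (M : Matrix I I ℂ)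
    (lam : ℂ) :
    (((X : ℂ[X]) • (1 : Matrix I I ℂ[X]) - M.map Polynomial.C).map (Polynomial.eval lam)) =
      lam • (1 : Matrix I I ℂ) - M := by
  ext i j
  simp [Matrix.one_apply, apply_ite (Polynomial.eval lam)]

lemma map_eval_big {I : Type*} [Fintype I] [DecidableEq I] (A B : Matrix I I ℂ) (lam : ℂ) :
    ((((X : ℂ[X]) ^ 2 - 1) • (1 : Matrix I I ℂ[X]) -
        ((X : ℂ[X]) • (A.map Polynomial.C) - B.map Polynomial.C)).map (Polynomial.eval lam)) =
      (lam ^ 2 - 1) • (1 : Matrix I I ℂ) - (lam • A - B) := by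
  ext i j
  simp [Matrix.one_apply, apply_ite (Polynomial.eval lam)]
  ring

/-- Theorem 6.2: suppose P is an invertible complex 2n×2n matrix
simultaneously lower-triangularizing ψ(ᵀW) and ψ(D_w) (with respect to an arbitrary
linear ordering b of the 2n indices), with diagonal entries μ_r and ξ_r respectively.
Then for every λ ∈ ℂ,
det(λI_{4m} − ψ(U)) = (λ²−1)^{2m−2n}·∏_r (λ² − λμ_r + ξ_r − 1)
(stated multiplied through by (λ²−1)^{2n} to avoid negative exponents). -/
theorem quat_walk_eigenvalues [Fintype V] [DecidableEq V] (G : SimpleGraph V)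
    [DecidableRel G.Adj] (hG : G.Connected) (n m : ℕ) (hn : n = Fintype.card V)
    (hm : m = G.edgeFinset.card) (q : G.Dart → Quaternion ℝ)
    (P : Matrix (V ⊕ V) (V ⊕ V) ℂ) (hP : IsUnit P.det)
    (b : V ⊕ V → ℕ) (hb : Function.Injective b)
    (hW : ∀ r s : V ⊕ V, b r < b s →
      (P⁻¹ * psi ((quatWeightMatrix G q)ᵀ) * P) r s = 0)
    (hD : ∀ r s : V ⊕ V, b r < b s →
      (P⁻¹ * psi (quatDegMatrix G q) * P) r s = 0) :
    ∀ lam : ℂ,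
      (lam ^ 2 - 1) ^ (2 * n) *
          (lam • (1 : Matrix (G.Dart ⊕ G.Dart) (G.Dart ⊕ G.Dart) ℂ) -
            psi (quatTransition G q)).det =
        (lam ^ 2 - 1) ^ (2 * m) *
          ∏ r : V ⊕ V,
            (lam ^ 2 - lam * (P⁻¹ * psi ((quatWeightMatrix G q)ᵀ) * P) r r +
              (P⁻¹ * psi (quatDegMatrix G q) * P) r r - 1) := by
  intro lam
  classical
  have hJJ : psi (quatArcInvMatrix G) * psi (quatArcInvMatrix G) = 1 := by
    rw [← psi_mul, JJ_eq, psi_one]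
  have hUq : psi (quatTransition G q) =
      psi (quatKMatrix G q) * psi ((quatLMatrix G)ᵀ) - psi (quatArcInvMatrix G) := by
    rw [← psi_mul, ← psi_sub, transition_eq]
  have hTK : psi ((quatLMatrix G)ᵀ) * psi (quatKMatrix G q) =
      psi ((quatWeightMatrix G q)ᵀ) := by rw [← psi_mul, LK_eq]
  have hTJK : psi ((quatLMatrix G)ᵀ) * (psi (quatArcInvMatrix G) * psi (quatKMatrix G q)) =
      psi (quatDegMatrix G q) := by rw [← psi_mul, ← psi_mul, LJK_eq]
  set c : ℂ →+* ℂ[X] := Polynomial.C with hc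
  have hJC : (psi (quatArcInvMatrix G)).map c * (psi (quatArcInvMatrix G)).map c = 1 := by
    rw [← Matrix.map_mul, hJJ, Matrix.map_one _ (map_zero c) (map_one c)]
  have bass := bass_identity ((psi ((quatLMatrix G)ᵀ)).map c) ((psi (quatKMatrix G q)).map c)
    ((psi (quatArcInvMatrix G)).map c) hJC (X : ℂ[X])
  have hKTJ : (psi (quatKMatrix G q)).map c * (psi ((quatLMatrix G)ᵀ)).map c -
      (psi (quatArcInvMatrix G)).map c = (psi (quatTransition G q)).map c := by
    rw [← Matrix.map_mul, ← Matrix.map_sub c (fun a b => map_sub c a b), ← hUq]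
  have hTKc : (psi ((quatLMatrix G)ᵀ)).map c * (psi (quatKMatrix G q)).map c
      = (psi ((quatWeightMatrix G q)ᵀ)).map c := by rw [← Matrix.map_mul, hTK]
  have hTJKc : (psi ((quatLMatrix G)ᵀ)).map c * (psi (quatArcInvMatrix G)).map c *
      (psi (quatKMatrix G q)).map c = (psi (quatDegMatrix G q)).map c := by
    rw [Matrix.mul_assoc, ← Matrix.map_mul, ← Matrix.map_mul, hTJK]
  rw [hKTJ, hTKc, hTJKc] at bass
  -- determinant of X-block
  have hJC_eq : (psi (quatArcInvMatrix G)).map c =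
      fromBlocks (Matrix.of (fun e f : G.Dart => if f = e.symm then (1 : ℂ[X]) else 0)) 0 0
        (Matrix.of (fun e f : G.Dart => if f = e.symm then (1 : ℂ[X]) else 0)) := by
    ext (e | e) (f | f) <;>
      simp [psi, quatArcInvMatrix, apply_ite Sc, apply_ite Pc, Sc_one, Sc_zero, Pc_one,
        Pc_zero, apply_ite (starRingEnd ℂ), apply_ite c, _root_.map_one, _root_.map_zero]
  have hdetX : ((X : ℂ[X]) • (1 : Matrix (G.Dart ⊕ G.Dart) (G.Dart ⊕ G.Dart) ℂ[X]) +
      (psi (quatArcInvMatrix G)).map c).det = ((X : ℂ[X]) ^ 2 - 1) ^ (2 * m) := by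
    have hsplit : (X : ℂ[X]) • (1 : Matrix (G.Dart ⊕ G.Dart) (G.Dart ⊕ G.Dart) ℂ[X]) +
        (psi (quatArcInvMatrix G)).map c =
        fromBlocks
          ((X : ℂ[X]) • 1 + Matrix.of (fun e f : G.Dart => if f = e.symm then (1 : ℂ[X]) else 0))
          0 0
          ((X : ℂ[X]) • 1 +
            Matrix.of (fun e f : G.Dart => if f = e.symm then (1 : ℂ[X]) else 0)) := by
      rw [hJC_eq, ← Matrix.fromBlocks_one, Matrix.fromBlocks_smul, Matrix.fromBlocks_add]
      simp
    rw [hsplit, Matrix.det_fromBlocks_zero₂₁, ← pow_two]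
    have hsq := det_invol_sq (R := ℂ[X]) (fun d : G.Dart => d.symm)
      SimpleGraph.Dart.symm_involutive SimpleGraph.Dart.symm_ne (X : ℂ[X])
    rw [hsq, SimpleGraph.dart_card_eq_twice_card_edges, ← hm]
  rw [hdetX] at bass
  have hcα : Fintype.card (V ⊕ V) = 2 * n := by
    simp [Fintype.card_sum, ← hn, two_mul]
  rw [hcα] at bass
  have hX2 : ((X : ℂ[X]) ^ 2 - 1) ≠ 0 := by
    intro h
    have := congrArg (Polynomial.eval 0) h
    simp at this
  have hne : (((X : ℂ[X]) ^ 2 - 1) ^ (Fintype.card (G.Dart ⊕ G.Dart))) ≠ 0 :=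
    pow_ne_zero _ hX2
  have key : ((X : ℂ[X]) • 1 - (psi (quatTransition G q)).map c).det *
      ((X : ℂ[X]) ^ 2 - 1) ^ (2 * n) =
      (((X : ℂ[X]) ^ 2 - 1) • 1 -
        ((X : ℂ[X]) • ((psi ((quatWeightMatrix G q)ᵀ)).map c) -
          (psi (quatDegMatrix G q)).map c)).det * ((X : ℂ[X]) ^ 2 - 1) ^ (2 * m) := by
    apply mul_right_cancel₀ hne
    linear_combination bass
  -- evaluate at lam
  have e1 : Polynomial.eval lam (((X : ℂ[X]) • 1 - (psi (quatTransition G q)).map c).det) =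
      (lam • 1 - psi (quatTransition G q)).det := by
    rw [show Polynomial.eval lam = ⇑(Polynomial.evalRingHom lam) from rfl, RingHom.map_det]
    congr 1
    rw [show (Polynomial.evalRingHom lam).mapMatrix
        ((X : ℂ[X]) • 1 - (psi (quatTransition G q)).map c) =
        ((X : ℂ[X]) • 1 - (psi (quatTransition G q)).map c).map (Polynomial.eval lam) from rfl,
      map_eval_smul_one_sub]
  have e2 : Polynomial.eval lam ((((X : ℂ[X]) ^ 2 - 1) • 1 -
      ((X : ℂ[X]) • ((psi ((quatWeightMatrix G q)ᵀ)).map c) -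
        (psi (quatDegMatrix G q)).map c)).det) =
      ((lam ^ 2 - 1) • 1 -
        (lam • psi ((quatWeightMatrix G q)ᵀ) - psi (quatDegMatrix G q))).det := by
    rw [show Polynomial.eval lam = ⇑(Polynomial.evalRingHom lam) from rfl, RingHom.map_det]
    congr 1
    rw [show (Polynomial.evalRingHom lam).mapMatrix (((X : ℂ[X]) ^ 2 - 1) • 1 -
        ((X : ℂ[X]) • ((psi ((quatWeightMatrix G q)ᵀ)).map c) -
          (psi (quatDegMatrix G q)).map c)) =
        (((X : ℂ[X]) ^ 2 - 1) • 1 -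
          ((X : ℂ[X]) • ((psi ((quatWeightMatrix G q)ᵀ)).map c) -
            (psi (quatDegMatrix G q)).map c)).map (Polynomial.eval lam) from rfl,
      map_eval_big]
  have ev := congrArg (Polynomial.eval lam) key
  simp only [Polynomial.eval_mul, Polynomial.eval_pow, Polynomial.eval_sub, Polynomial.eval_one,
    Polynomial.eval_X, e1, e2] at ev
  -- conjugation and triangularity
  have hPdet : P.det ≠ 0 := hP.ne_zero
  have hexp : P⁻¹ * ((lam ^ 2 - 1) • 1 -
      (lam • psi ((quatWeightMatrix G q)ᵀ) - psi (quatDegMatrix G q))) * P =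
      (lam ^ 2 - 1) • 1 - (lam • (P⁻¹ * psi ((quatWeightMatrix G q)ᵀ) * P) -
        P⁻¹ * psi (quatDegMatrix G q) * P) := by
    rw [Matrix.mul_sub, Matrix.mul_sub, Matrix.sub_mul, Matrix.sub_mul, Matrix.mul_smul,
      Matrix.mul_smul, Matrix.smul_mul, Matrix.smul_mul, Matrix.mul_one,
      Matrix.nonsing_inv_mul P hP]
  have hconj : ((lam ^ 2 - 1) • 1 -
      (lam • psi ((quatWeightMatrix G q)ᵀ) - psi (quatDegMatrix G q))).det =
      (((lam ^ 2 - 1) • 1 - (lam • (P⁻¹ * psi ((quatWeightMatrix G q)ᵀ) * P) -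
        P⁻¹ * psi (quatDegMatrix G q) * P)) :
          Matrix (V ⊕ V) (V ⊕ V) ℂ).det := by
    rw [← hexp, Matrix.det_mul, Matrix.det_mul, Matrix.det_nonsing_inv]
    rw [Ring.inverse_eq_inv']
    field_simp
  have htri : (((lam ^ 2 - 1) • 1 - (lam • (P⁻¹ * psi ((quatWeightMatrix G q)ᵀ) * P) -
      P⁻¹ * psi (quatDegMatrix G q) * P)) : Matrix (V ⊕ V) (V ⊕ V) ℂ).det =
      ∏ r : V ⊕ V, (lam ^ 2 - lam * (P⁻¹ * psi ((quatWeightMatrix G q)ᵀ) * P) r r +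
        (P⁻¹ * psi (quatDegMatrix G q) * P) r r - 1) := by
    rw [det_eq_prod_diag _ b hb]
    · refine Finset.prod_congr rfl fun r _ => ?_
      simp only [Matrix.sub_apply, Matrix.smul_apply, Matrix.one_apply_eq, smul_eq_mul, mul_one]
      ring
    · intro r s hrs
      have hne' : r ≠ s := fun h => by subst h; exact lt_irrefl _ hrs
      simp [Matrix.sub_apply, Matrix.smul_apply, Matrix.one_apply_ne hne',
        hW r s hrs, hD r s hrs]
  rw [hconj, htri] at ev
  linear_combination ev
end
end

section
/- Let G be a finite connected simple graph, w : D(G) → ℍ an arc weight satisfying the unitarity condition that w(e) = w(f) whenever o(e) = o(f), and let W and D_w be the quaternionic weighted matrix and weighted degree matrix. (a) If the sum Σ_{e : o(e) = u} w(e) is independent of the vertex u, then ᵀW·D_w = D_w·ᵀW. (b) Conversely, if in addition w(e) ≠ 0 for every arc e ∈ D(G), then ᵀW·D_w = D_w·ᵀW implies that Σ_{e : o(e) = u} w(e) is independent of u. -/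
noncomputable section

open Matrix

variable {V : Type*}

/-- Proposition 6.3: let w satisfy w(e) = w(f) whenever o(e) = o(f).
(a) If Σ_{e : o(e)=u} w(e) is independent of u, then ᵀW·D_w = D_w·ᵀW.
(b) If moreover w(e) ≠ 0 for every arc e, then ᵀW·D_w = D_w·ᵀW implies that
Σ_{e : o(e)=u} w(e) is independent of u. -/
theorem quat_commutativity_iff [Fintype V] [DecidableEq V] (G : SimpleGraph V)
    [DecidableRel G.Adj] (hG : G.Connected) (w : G.Dart → Quaternion ℝ)
    (hw : ∀ e f : G.Dart, e.toProd.1 = f.toProd.1 → w e = w f) :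
    ((∀ u v : V,
        (∑ e : G.Dart, if e.toProd.1 = u then w e else 0) =
          ∑ e : G.Dart, if e.toProd.1 = v then w e else 0) →
      (quatWeightMatrix G w)ᵀ * quatDegMatrix G w =
        quatDegMatrix G w * (quatWeightMatrix G w)ᵀ) ∧
    ((∀ e : G.Dart, w e ≠ 0) →
      (quatWeightMatrix G w)ᵀ * quatDegMatrix G w =
          quatDegMatrix G w * (quatWeightMatrix G w)ᵀ →
      ∀ u v : V,
        (∑ e : G.Dart, if e.toProd.1 = u then w e else 0) =
          ∑ e : G.Dart, if e.toProd.1 = v then w e else 0) := by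
  set S : V → Quaternion ℝ := fun u => ∑ e : G.Dart, if e.toProd.1 = u then w e else 0 with hS
  -- each weight commutes with the degree sum at its origin
  have key : ∀ (v : V) (e : G.Dart), e.toProd.1 = v → w e * S v = S v * w e := by
    intro v e he
    have : Commute (w e) (S v) := by
      apply Commute.sum_right
      intro f _
      by_cases h : f.toProd.1 = v
      · simp only [if_pos h]
        rw [hw f e (h.trans he.symm)]
      · simp [if_neg h]
    exact this.eq
  constructor
  · intro hconst
    apply Matrix.ext
    intro u v
    rw [quatDegMatrix, Matrix.mul_diagonal, Matrix.diagonal_mul]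
    show (quatWeightMatrix G w)ᵀ u v * S v = S u * (quatWeightMatrix G w)ᵀ u v
    rw [Matrix.transpose_apply, quatWeightMatrix]
    by_cases h : G.Adj v u
    · simp only [dif_pos h]
      rw [key v ⟨(v, u), h⟩ rfl, show S u = S v from hconst u v]
    · simp [dif_neg h]
  · intro hnz heq u v
    -- first: adjacency implies equal sums
    have step : ∀ u v : V, G.Adj u v → S u = S v := by
      intro u v huv
      have h := Matrix.ext_iff.2 heq u v
      rw [quatDegMatrix, Matrix.mul_diagonal, Matrix.diagonal_mul] at h
      have hvu : G.Adj v u := huv.symm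
      rw [Matrix.transpose_apply, quatWeightMatrix] at h
      simp only [dif_pos hvu] at h
      have h2 := key v ⟨(v, u), hvu⟩ rfl
      -- h : w e * S v = S u * w e ; h2 : w e * S v = S v * w e
      have : S u * w ⟨(v, u), hvu⟩ = S v * w ⟨(v, u), hvu⟩ := by rw [← h, h2]
      exact mul_right_cancel₀ (hnz _) this
    obtain ⟨p⟩ := hG u v
    induction p with
    | nil => rfl
    | cons h p ih => exact (step _ _ h).trans ih
end
end
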